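/- arXiv:1905.10342 — 2 statements merged into one kernel-verified Lean document; each statement's English description precedes it below -/
import Mathlib

section
/- For every σ > 0, ∫₀^π sin²θ / (σ² + sin²(θ/2))^{3/2} dθ ≤ 8 · arsinh(1/σ), where arsinh is the inverse hyperbolic sine. -/
open Real

/-- For every σ > 0,
∫₀^π sin²θ / (σ² + sin²(θ/2))^{3/2} dθ ≤ 8 · arsinh(1/σ). -/
theorem integral_sin_sq_le_arsinh (σ : ℝ) (hσ : 0 < σ) :
    ∫ θ in (0:ℝ)..π, Real.sin θ ^ 2 / (σ ^ 2 + Real.sin (θ / 2) ^ 2) ^ ((3:ℝ) / 2)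
      ≤ 8 * Real.arsinh (1 / σ) := by
  have hA : ∀ θ : ℝ, 0 < σ ^ 2 + Real.sin (θ / 2) ^ 2 := fun θ =>
    lt_of_lt_of_le (pow_pos hσ 2) (le_add_of_nonneg_right (sq_nonneg _))
  set g : ℝ → ℝ := fun θ => 4 * Real.cos (θ / 2) / Real.sqrt (σ ^ 2 + Real.sin (θ / 2) ^ 2)
    with hg_def
  have hsqrt_pos : ∀ θ : ℝ, 0 < Real.sqrt (σ ^ 2 + Real.sin (θ / 2) ^ 2) := fun θ =>
    Real.sqrt_pos.mpr (hA θ)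
  -- key sqrt identity
  have hkey : ∀ θ : ℝ, Real.sqrt (σ ^ 2 + Real.sin (θ / 2) ^ 2)
      = σ * Real.sqrt (1 + (Real.sin (θ / 2) / σ) ^ 2) := by
    intro θ
    rw [show σ ^ 2 + Real.sin (θ / 2) ^ 2 = σ ^ 2 * (1 + (Real.sin (θ / 2) / σ) ^ 2) by
      field_simp]
    rw [Real.sqrt_mul (sq_nonneg σ), Real.sqrt_sq hσ.le]
  -- derivative of the antiderivative
  have hderiv : ∀ θ : ℝ,
      HasDerivAt (fun θ => 8 * Real.arsinh (Real.sin (θ / 2) / σ)) (g θ) θ := by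
    intro θ
    have h0 : HasDerivAt (fun θ : ℝ => θ / 2) (1 / 2) θ := (hasDerivAt_id θ).div_const 2
    have h1 : HasDerivAt (fun θ : ℝ => Real.sin (θ / 2) / σ)
        (Real.cos (θ / 2) * (1 / 2) / σ) θ :=
      by have := ((Real.hasDerivAt_sin (θ / 2)).comp θ h0).div_const σ; exact this
    have h2 := ((Real.hasDerivAt_arsinh (Real.sin (θ / 2) / σ)).comp θ h1).const_mul (8 : ℝ)
    refine h2.congr_deriv ?_
    have h3 : (0:ℝ) < Real.sqrt (1 + (Real.sin (θ / 2) / σ) ^ 2) :=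
      Real.sqrt_pos.mpr (by positivity)
    rw [hg_def]
    simp only
    rw [hkey θ]
    field_simp
    ring
  -- value of ∫ g
  have hgcont : Continuous g := by
    apply Continuous.div
    · fun_prop
    · exact Real.continuous_sqrt.comp (by fun_prop)
    · exact fun θ => (hsqrt_pos θ).ne'
  have hgint : ∫ θ in (0:ℝ)..π, g θ = 8 * Real.arsinh (1 / σ) := by
    rw [intervalIntegral.integral_eq_sub_of_hasDerivAt (fun θ _ => hderiv θ)
      (hgcont.intervalIntegrable 0 π)]
    norm_num [Real.sin_pi_div_two]
  -- pointwise bound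
  have hle : ∀ θ ∈ Set.Icc (0:ℝ) π,
      Real.sin θ ^ 2 / (σ ^ 2 + Real.sin (θ / 2) ^ 2) ^ ((3:ℝ) / 2) ≤ g θ := by
    intro θ hθ
    set t := Real.sin (θ / 2)
    set c := Real.cos (θ / 2)
    have hc0 : 0 ≤ c := Real.cos_nonneg_of_mem_Icc
      ⟨by linarith [hθ.1, Real.pi_pos], by linarith [hθ.2]⟩
    have hc1 : c ≤ 1 := Real.cos_le_one _
    have hsin : Real.sin θ = 2 * t * c := by
      rw [show θ = 2 * (θ / 2) by ring, Real.sin_two_mul]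
    set A := σ ^ 2 + t ^ 2 with hAdef
    have hApos : 0 < A := hA θ
    have ht2 : t ^ 2 ≤ A := le_add_of_nonneg_left (sq_nonneg σ)
    have hpow : A ^ ((3:ℝ) / 2) = A * Real.sqrt A := by
      rw [show (3:ℝ)/2 = 1 + 1/2 by norm_num, Real.rpow_add hApos, Real.rpow_one,
        ← Real.sqrt_eq_rpow]
    rw [hsin, hpow, hg_def]
    simp only
    rw [show (4:ℝ) * c / Real.sqrt A = 4 * (A * c) / (A * Real.sqrt A) by
      have h1 : (Real.sqrt A) ≠ 0 := (hsqrt_pos θ).ne'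
      field_simp]
    apply div_le_div_of_nonneg_right _ (by positivity)
    nlinarith [sq_nonneg (t * c), mul_le_mul_of_nonneg_left hc1 hc0]
  -- conclude
  calc ∫ θ in (0:ℝ)..π, Real.sin θ ^ 2 / (σ ^ 2 + Real.sin (θ / 2) ^ 2) ^ ((3:ℝ) / 2)
      ≤ ∫ θ in (0:ℝ)..π, g θ := by
        apply intervalIntegral.integral_mono_on Real.pi_pos.le _ 
          (hgcont.intervalIntegrable 0 π) hle
        apply Continuous.intervalIntegrable
        apply Continuous.div (by fun_prop)
        · apply Continuous.rpow_const (by fun_prop)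
          exact fun θ => Or.inr (by norm_num)
        · exact fun θ => (Real.rpow_pos_of_pos (hA θ) _).ne'
    _ = 8 * Real.arsinh (1 / σ) := hgint
end

section
/- For every L > 0 there exist constants C₁ > 0 and C₂ > 0, depending only on L, such that for every l ∈ (0, L], every ε ∈ (0, 1/2), and all points (r,z), (r',z') with (r−l)² + z² ≤ (lε)², (r'−l)² + z'² ≤ (lε)² and (r,z) ≠ (r',z'), one has G(r,z,r',z') · r' ≤ ((1 + C₁ ε) l² / (4π²)) · log( ((r−r')² + (z−z')²)^{−1/2} ) + C₂. -/
open MeasureTheory Real Set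

noncomputable section

/-- The open meridional half-plane Π = {(r,z) : r > 0}. -/
def Pi2 : Set (ℝ × ℝ) := {p | 0 < p.1}

/-- The Green's function G of the operator 𝓛 on Π. -/
def Gker (p q : ℝ × ℝ) : ℝ :=
  p.1 * q.1 / (8 * π ^ 2) *
    ∫ θ in (-π)..π,
      Real.cos θ / Real.sqrt ((p.2 - q.2) ^ 2 + p.1 ^ 2 + q.1 ^ 2 - 2 * p.1 * q.1 * Real.cos θ)

/-- The measure ν on Π with density 2πr w.r.t. Lebesgue measure. -/
def nuM : Measure (ℝ × ℝ) :=
  (volume.restrict Pi2).withDensity fun p => ENNReal.ofReal (2 * π * p.1)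

/-- Gζ, the Green's operator applied to ζ. -/
def Gop (ζ : ℝ × ℝ → ℝ) (p : ℝ × ℝ) : ℝ := ∫ q, Gker p q * ζ q ∂nuM

/-- The energy functional E_λ. -/
def Efun (W lam : ℝ) (ζ : ℝ × ℝ → ℝ) : ℝ :=
  (1 / 2) * ∫ p, ζ p * Gop ζ p ∂nuM - W * Real.log lam / 2 * ∫ p, p.1 ^ 2 * ζ p ∂nuM

/-- The class 𝓦𝓡_λ. -/
def WRset (lam : ℝ) : Set (ℝ × ℝ → ℝ) :=
  {ζ | Measurable ζ ∧ (∃ M : ℝ, ∀ᵐ p ∂nuM, |ζ p| ≤ M) ∧ (∀ᵐ p ∂nuM, 0 ≤ ζ p) ∧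
    ∀ t > (0 : ℝ), ∫ p, max (ζ p - t) 0 ∂nuM ≤ max (1 - t / lam) 0}

/-- The class 𝓡_λ of rearrangements λ·1_A with ν(A) = 1/λ. -/
def Rset (lam : ℝ) : Set (ℝ × ℝ → ℝ) :=
  {ζ | ∃ A : Set (ℝ × ℝ), MeasurableSet A ∧ A ⊆ Pi2 ∧ nuM A = ENNReal.ofReal (1 / lam) ∧
    ζ =ᵐ[nuM] A.indicator fun _ => lam}

/-- The class 𝓡𝓒_λ of functions λ·1_A with ν(A) ≤ 1/λ. -/
def RCset (lam : ℝ) : Set (ℝ × ℝ → ℝ) :=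
  {ζ | ∃ A : Set (ℝ × ℝ), MeasurableSet A ∧ A ⊆ Pi2 ∧ nuM A ≤ ENNReal.ofReal (1 / lam) ∧
    ζ =ᵐ[nuM] A.indicator fun _ => lam}

/-- The impulse of the flow. -/
def impulse (ζ : ℝ × ℝ → ℝ) : ℝ := (1 / 2) * ∫ p, p.1 ^ 2 * ζ p ∂nuM

/-- The vortex cross-section Ω_λ = {(r,z) ∈ Π : Gζ(r,z) − (W log λ/2) r² > μ}. -/
def Omg (W lam μ : ℝ) (ζ : ℝ × ℝ → ℝ) : Set (ℝ × ℝ) :=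
  {p | p ∈ Pi2 ∧ Gop ζ p - W * Real.log lam / 2 * p.1 ^ 2 > μ}


lemma jordan_aux {θ : ℝ} (h : |θ| ≤ π) : 4 * θ^2 / π^2 ≤ 2 * (1 - Real.cos θ) := by
  have hπ := Real.pi_pos
  have hhalf : Real.cos θ = 1 - 2 * Real.sin (θ/2)^2 := by
    have h2 : Real.cos θ = Real.cos (θ/2) * Real.cos (θ/2) - Real.sin (θ/2) * Real.sin (θ/2) := by
      rw [← Real.cos_add]; norm_num
    rw [h2]
    nlinarith [Real.sin_sq_add_cos_sq (θ/2)]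
  have key : θ^2/π^2 ≤ Real.sin (θ/2)^2 := by
    rcases abs_le.mp h with ⟨h1, h2⟩
    rcases le_total 0 θ with hθ | hθ
    · have hs := Real.mul_le_sin (x := θ/2) (by linarith) (by linarith)
      have hq : θ/π ≤ Real.sin (θ/2) := by
        have he : 2/π * (θ/2) = θ/π := by field_simp
        linarith [he ▸ hs]
      have h0 : 0 ≤ θ/π := div_nonneg hθ hπ.le
      have hp := pow_le_pow_left₀ h0 hq 2
      rwa [div_pow] at hp
    · have hs := Real.mul_le_sin (x := -θ/2) (by linarith) (by linarith)
      have hq : -θ/π ≤ Real.sin (-θ/2) := by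
        have he : 2/π * (-θ/2) = -θ/π := by field_simp
        linarith [he ▸ hs]
      have h0 : 0 ≤ -θ/π := div_nonneg (by linarith) hπ.le
      have hp := pow_le_pow_left₀ h0 hq 2
      rw [show -θ/2 = -(θ/2) by ring, Real.sin_neg] at hp
      simpa [neg_div, div_pow, neg_sq] using hp
  have hπ2 : (0:ℝ) < π^2 := by positivity
  rw [hhalf]
  rw [div_le_iff₀ hπ2] at key ⊢
  nlinarith [key]

lemma cos_quartic {θ : ℝ} (h : |θ| ≤ 1) : θ^2 - 2*(1 - Real.cos θ) ≤ 5*θ^4/48 := by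
  have := Real.cos_bound h
  have habs : |θ|^4 = θ^4 := by
    rw [← abs_pow]; exact abs_of_nonneg (by positivity)
  rw [abs_le] at this
  nlinarith [this.2]

set_option maxHeartbeats 1000000 in
lemma inv_sqrt_bound (d a θ : ℝ) (hd : 0 < d) (ha : 0 < a) (hθ : |θ| ≤ π) :
    1/Real.sqrt (d^2 + 2*a*(1 - Real.cos θ)) ≤ 1/Real.sqrt (d^2 + a*θ^2) + 2*|θ|/Real.sqrt a := by
  set s := Real.sqrt a with hs_def
  have hs : 0 < s := Real.sqrt_pos.mpr ha
  have hs2 : s^2 = a := Real.sq_sqrt ha.le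
  have hcos : Real.cos θ ≤ 1 := Real.cos_le_one θ
  have harg1 : 0 < d^2 + 2*a*(1 - Real.cos θ) := by nlinarith
  have harg2 : 0 < d^2 + a*θ^2 := by positivity
  set u := Real.sqrt (d^2 + 2*a*(1-Real.cos θ)) with hu_def
  set v := Real.sqrt (d^2 + a*θ^2) with hv_def
  have hu : 0 < u := Real.sqrt_pos.mpr harg1
  have hv : 0 < v := Real.sqrt_pos.mpr harg2
  have hu2 : u^2 = d^2 + 2*a*(1-Real.cos θ) := Real.sq_sqrt harg1.le
  have hv2 : v^2 = d^2 + a*θ^2 := Real.sq_sqrt harg2.le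
  have hjord := jordan_aux hθ
  set t := |θ| with ht_def
  have ht0 : 0 ≤ t := abs_nonneg θ
  have ht2 : t^2 = θ^2 := sq_abs θ
  have hπ := Real.pi_pos
  have hπ4 : π ≤ 4 := by linarith [Real.pi_le_four]
  have hjord' : a*θ^2/4 ≤ 2*a*(1 - Real.cos θ) := by
    have h0 : 4*θ^2/π^2 ≥ θ^2/4 := by
      rw [ge_iff_le, div_le_div_iff₀ (by norm_num) (by positivity)]
      nlinarith [sq_nonneg θ, mul_le_mul_of_nonneg_left hπ4 hπ.le]
    nlinarith [mul_le_mul_of_nonneg_left hjord ha.le,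
      mul_le_mul_of_nonneg_left h0.le ha.le]
  have hul : s*t/2 ≤ u := by
    have h1 : (s*t/2)^2 ≤ d^2 + 2*a*(1-Real.cos θ) := by nlinarith [sq_nonneg d]
    calc s*t/2 = Real.sqrt ((s*t/2)^2) := (Real.sqrt_sq (by positivity)).symm
    _ ≤ u := Real.sqrt_le_sqrt h1
  have hvl : s*t ≤ v := by
    have h1 : (s*t)^2 ≤ d^2 + a*θ^2 := by nlinarith [sq_nonneg d]
    calc s*t = Real.sqrt ((s*t)^2) := (Real.sqrt_sq (by positivity)).symm
    _ ≤ v := Real.sqrt_le_sqrt h1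
  have hΔl : 2*(1-Real.cos θ) ≤ θ^2 := by
    nlinarith [Real.one_sub_sq_div_two_le_cos (x := θ)]
  have huv : u ≤ v := Real.sqrt_le_sqrt (by nlinarith)
  clear_value s u v t
  clear hs_def hu_def hv_def hjord hjord'
  rcases le_or_gt 1 t with h1t | h1t
  · have h2 : s/2 ≤ u := by nlinarith
    have h3 : 1/u ≤ 2/s := by
      rw [div_le_div_iff₀ hu hs]; linarith
    have h4 : 2/s ≤ 2*t/s := by
      rw [div_le_div_iff₀ hs hs]; nlinarith
    have h5 : 0 < 1/v := by positivity
    linarith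
  · have hΔu : θ^2 - 2*(1-Real.cos θ) ≤ 5*θ^4/48 := cos_quartic (ht_def ▸ h1t.le)
    have ht4 : t^4 = θ^4 := by rw [show t^4 = (t^2)^2 by ring, ht2]; ring
    have hsq : v^2 - u^2 ≤ 5*s^2*t^4/48 := by
      calc v^2 - u^2 = a*(θ^2 - 2*(1-Real.cos θ)) := by rw [hv2, hu2]; ring
      _ ≤ a*(5*θ^4/48) := mul_le_mul_of_nonneg_left hΔu ha.le
      _ = 5*s^2*t^4/48 := by rw [hs2, ht4]; ring
    have h_uv : (s*t/2)*(s*t) ≤ u*v :=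
      mul_le_mul hul hvl (by positivity) hu.le
    have h_sum : (3/2)*(s*t) ≤ v + u := by linarith
    have h_3 : ((s*t/2)*(s*t))*((3/2)*(s*t)) ≤ (u*v)*(v+u) :=
      mul_le_mul h_uv h_sum (by positivity) (by positivity)
    have hfinal : (s*(v-u))*(v+u) ≤ (2*t*(u*v))*(v+u) := by
      nlinarith [mul_le_mul_of_nonneg_left hsq hs.le,
        mul_le_mul_of_nonneg_left h_3 (mul_nonneg (by norm_num : (0:ℝ) ≤ 2) ht0)]
    have hkey : s*(v-u) ≤ 2*t*(u*v) :=
      le_of_mul_le_mul_right hfinal (by positivity)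
    rw [div_add_div _ _ (ne_of_gt hv) (ne_of_gt hs), div_le_div_iff₀ hu (by positivity)]
    nlinarith [hkey]


lemma arsinh_le_log {x : ℝ} (hx : 1 ≤ x) : Real.arsinh x ≤ Real.log (3*x) := by
  rw [Real.arsinh]
  apply Real.log_le_log (by positivity)
  have h : Real.sqrt (1 + x^2) ≤ 1 + x := by
    rw [show (1:ℝ) + x = Real.sqrt ((1+x)^2) from (Real.sqrt_sq (by linarith)).symm]
    exact Real.sqrt_le_sqrt (by nlinarith)
  linarith

lemma integral_abs_pi : ∫ θ in (-π)..π, |θ| = π^2 := by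
  have hπ := Real.pi_pos
  have hi : ∀ a b : ℝ, IntervalIntegrable (fun θ : ℝ => |θ|) MeasureTheory.volume a b :=
    fun a b => continuous_abs.intervalIntegrable a b
  have h1 : ∫ θ in (-π)..(0:ℝ), |θ| = π^2/2 := by
    rw [intervalIntegral.integral_congr (g := fun θ : ℝ => -θ)
      (fun x hx => by
        rw [Set.uIcc_of_le (by linarith : -π ≤ (0:ℝ))] at hx
        exact abs_of_nonpos hx.2)]
    rw [intervalIntegral.integral_neg, integral_id]
    ring
  have h2 : ∫ θ in (0:ℝ)..π, |θ| = π^2/2 := by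
    rw [intervalIntegral.integral_congr (g := fun θ : ℝ => θ)
      (fun x hx => by
        rw [Set.uIcc_of_le (by linarith : (0:ℝ) ≤ π)] at hx
        exact abs_of_nonneg hx.1)]
    rw [integral_id]
    ring
  rw [← intervalIntegral.integral_add_adjacent_intervals (hi (-π) 0) (hi 0 π), h1, h2]
  ring

lemma integral_inv_sqrt_quad (d a : ℝ) (hd : 0 < d) (ha : 0 < a) :
    ∫ θ in (-π)..π, 1/Real.sqrt (d^2 + a*θ^2)
      = (2/Real.sqrt a) * Real.arsinh (Real.sqrt a * π / d) := by
  set s := Real.sqrt a with hs_def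
  have hs : 0 < s := Real.sqrt_pos.mpr ha
  have hs2 : s^2 = a := Real.sq_sqrt ha.le
  have hderiv : ∀ x ∈ Set.uIcc (-π) π,
      HasDerivAt (fun t => (1/s) * Real.arsinh (s*t/d)) (1/Real.sqrt (d^2 + a*x^2)) x := by
    intro x _
    have h1 : HasDerivAt (fun t : ℝ => s*t/d) (s/d) x := by
      simpa using ((hasDerivAt_id x).const_mul s).div_const d
    have h2 := ((Real.hasDerivAt_arsinh (s*x/d)).comp x h1).const_mul (1/s)
    refine h2.congr_deriv ?_
    have hsp : 0 < Real.sqrt (d^2 + a*x^2) := Real.sqrt_pos.mpr (by positivity)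
    have e : Real.sqrt (1 + (s*x/d)^2) = Real.sqrt (d^2 + a*x^2) / d := by
      rw [show 1 + (s*x/d)^2 = (d^2 + a*x^2)/d^2 by
        rw [← hs2]; field_simp]
      rw [Real.sqrt_div (by positivity), Real.sqrt_sq hd.le]
    rw [e]
    field_simp
  have hc : Continuous (fun θ : ℝ => 1/Real.sqrt (d^2 + a*θ^2)) := by
    apply Continuous.div continuous_const
    · exact Real.continuous_sqrt.comp (by continuity)
    · intro x; exact ne_of_gt (Real.sqrt_pos.mpr (by positivity))
  rw [intervalIntegral.integral_eq_sub_of_hasDerivAt hderiv (hc.intervalIntegrable _ _)]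
  rw [show s*(-π)/d = -(s*π/d) by ring, Real.arsinh_neg]
  ring


lemma key_integral_bound (d a : ℝ) (hd : 0 < d) (ha : 0 < a)
    (hda : d ≤ π * Real.sqrt a) :
    ∫ θ in (-π)..π, Real.cos θ / Real.sqrt (d^2 + 2*a*(1 - Real.cos θ))
      ≤ (2/Real.sqrt a) * (Real.log (3*π*Real.sqrt a/d) + π^2) := by
  have hπ := Real.pi_pos
  set s := Real.sqrt a with hs_def
  have hs : 0 < s := Real.sqrt_pos.mpr ha
  have hargpos : ∀ θ : ℝ, 0 < d^2 + 2*a*(1 - Real.cos θ) := by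
    intro θ
    nlinarith [Real.cos_le_one θ]
  have hcf : Continuous (fun θ : ℝ => Real.cos θ / Real.sqrt (d^2 + 2*a*(1 - Real.cos θ))) := by
    apply Continuous.div Real.continuous_cos
    · exact Real.continuous_sqrt.comp (by continuity)
    · intro x; exact ne_of_gt (Real.sqrt_pos.mpr (hargpos x))
  have hc1 : Continuous (fun θ : ℝ => 1/Real.sqrt (d^2 + a*θ^2)) := by
    apply Continuous.div continuous_const
    · exact Real.continuous_sqrt.comp (by continuity)
    · intro x; exact ne_of_gt (Real.sqrt_pos.mpr (by positivity))
  have hc2 : Continuous (fun θ : ℝ => 2*|θ|/s) := by continuity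
  have hint1 : IntervalIntegrable (fun θ : ℝ => 1/Real.sqrt (d^2 + a*θ^2)) MeasureTheory.volume (-π) π := hc1.intervalIntegrable (-π) π
  have hint2 : IntervalIntegrable (fun θ : ℝ => 2*|θ|/s) MeasureTheory.volume (-π) π := hc2.intervalIntegrable (-π) π
  have hmono : ∫ θ in (-π)..π, Real.cos θ / Real.sqrt (d^2 + 2*a*(1 - Real.cos θ))
      ≤ ∫ θ in (-π)..π, (1/Real.sqrt (d^2 + a*θ^2) + 2*|θ|/s) := by
    apply intervalIntegral.integral_mono_on (by linarith) (hcf.intervalIntegrable _ _)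
      (hint1.add hint2)
    intro x hx
    have hxabs : |x| ≤ π := abs_le.mpr ⟨hx.1, hx.2⟩
    calc Real.cos x / Real.sqrt (d^2 + 2*a*(1 - Real.cos x))
        ≤ 1 / Real.sqrt (d^2 + 2*a*(1 - Real.cos x)) := by
          gcongr
          exact Real.cos_le_one x

      _ ≤ 1/Real.sqrt (d^2 + a*x^2) + 2*|x|/s := inv_sqrt_bound d a x hd ha hxabs
  have hsplit : ∫ θ in (-π)..π, (1/Real.sqrt (d^2 + a*θ^2) + 2*|θ|/s)
      = (2/s) * Real.arsinh (s*π/d) + (2/s)*π^2 := by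
    rw [intervalIntegral.integral_add hint1 hint2,
      integral_inv_sqrt_quad d a hd ha]
    congr 1
    rw [show (fun θ : ℝ => 2*|θ|/s) = (fun θ : ℝ => (2/s)*|θ|) from funext (fun θ => by ring)]
    rw [intervalIntegral.integral_const_mul, integral_abs_pi]
  have hx1 : 1 ≤ s*π/d := by
    rw [le_div_iff₀ hd]
    linarith
  have harsinh : Real.arsinh (s*π/d) ≤ Real.log (3*π*s/d) := by
    have := arsinh_le_log hx1
    rwa [show 3*(s*π/d) = 3*π*s/d by ring] at this
  have h2s : 0 ≤ 2/s := by positivity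
  calc ∫ θ in (-π)..π, Real.cos θ / Real.sqrt (d^2 + 2*a*(1 - Real.cos θ))
      ≤ (2/s) * Real.arsinh (s*π/d) + (2/s)*π^2 := by rw [← hsplit]; exact hmono
    _ ≤ (2/s) * Real.log (3*π*s/d) + (2/s)*π^2 := by nlinarith [mul_le_mul_of_nonneg_left harsinh h2s]
    _ = (2/s) * (Real.log (3*π*s/d) + π^2) := by ring

lemma aux_disc {l ε x y : ℝ} (hl : 0 < l) (hε : 0 < ε)
    (h : (x - l)^2 + y^2 ≤ (l*ε)^2) :
    (l - l*ε ≤ x ∧ x ≤ l + l*ε) ∧ y^2 ≤ (l*ε)^2 := by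
  refine ⟨⟨?_, ?_⟩, ?_⟩
  · nlinarith [sq_nonneg y, sq_nonneg (x - l + l*ε), mul_pos hl hε]
  · nlinarith [sq_nonneg y, sq_nonneg (x - l - l*ε), mul_pos hl hε]
  · nlinarith [sq_nonneg (x - l)]

lemma aux_final (L l ε S R ld A1 A2 LB P C₂ : ℝ)
    (hL : 0 < L) (hl : 0 < l) (hlL : l ≤ L) (hε : 0 < ε) (hε2 : ε < 1/2)
    (hS0 : 0 < S) (hR0 : 0 < R)
    (hSu : S ≤ l*(1+ε)) (hRu : R ≤ l + l*ε)
    (hld : ld ≤ A1) (hA1 : 0 ≤ A1)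
    (hLB : LB ≤ A2) (hA2 : 0 ≤ A2)
    (hP : 0 < P)
    (hC : 4*P*C₂ = (5/2)*L^2*A1 + (9/4)*L^2*(A2+P) + 4*P) :
    S*R*(LB - ld + P) ≤ (1+3*ε)*l^2*(-ld) + 4*P*C₂ := by
  have hRu' : R ≤ l*(1+ε) := by linarith
  have hlp : 0 < l*(1+ε) := by positivity
  have F1 : S*R ≤ (1+3*ε)*l^2 := by
    have h := mul_le_mul hSu hRu' hR0.le hlp.le
    have h0 : 0 ≤ (l*l)*(ε*(1-ε)) :=
      mul_nonneg (mul_nonneg hl.le hl.le) (mul_nonneg hε.le (by linarith))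
    linarith [h, h0]
  have F2 : 0 ≤ S*R := by positivity
  have hlLe : l*(1+ε) ≤ (3/2)*L := by
    linarith [mul_lt_mul_of_pos_left hε2 hl, hlL]
  have F3 : S*R ≤ (9/4)*L^2 := by
    have h := mul_le_mul (hSu.trans hlLe) (hRu'.trans hlLe) hR0.le (by linarith)
    linarith [h]
  have F4 : (1+3*ε)*l^2 ≤ (5/2)*L^2 := by
    linarith [mul_le_mul hlL hlL hl.le hL.le,
      mul_le_mul_of_nonneg_right hε2.le (sq_nonneg l)]
  have claimA : S*R*(-ld) ≤ (1+3*ε)*l^2*(-ld) + (5/2)*L^2*A1 := by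
    rcases le_or_gt 0 (-ld) with h | h
    · have h1 := mul_le_mul_of_nonneg_right F1 h
      have h2 : 0 ≤ (5/2)*L^2*A1 := by positivity
      linarith
    · have hldpos : 0 < ld := by linarith
      have hmul := mul_le_mul (show (1+3*ε)*l^2 - S*R ≤ (5/2)*L^2 by linarith)
        hld hldpos.le (by positivity)
      linarith [hmul]
  have claimB : S*R*(LB + P) ≤ (9/4)*L^2*(A2 + P) := by
    rcases le_or_gt (LB + P) 0 with h | h
    · have h1 := mul_nonpos_of_nonneg_of_nonpos F2 h
      have h2 : 0 ≤ (9/4)*L^2*(A2+P) := by positivity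
      linarith
    · exact mul_le_mul F3 (by linarith) h.le (by positivity)
  have hsplit : S*R*(LB - ld + P) = S*R*(LB + P) + S*R*(-ld) := by ring
  linarith [hsplit, claimA, claimB, hC, hP]


set_option maxHeartbeats 1000000 in
/-- For every L > 0 there exist C₁, C₂ > 0, depending only on L, such that
for every l ∈ (0,L], ε ∈ (0,1/2) and all distinct points in the disc of radius lε about (l,0),
G(r,z,r',z')·r' ≤ ((1+C₁ε) l²/(4π²))·log(((r−r')²+(z−z')²)^{−1/2}) + C₂. -/
theorem green_log_upper_bound (L : ℝ) (hL : 0 < L) :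
    ∃ C₁ > (0:ℝ), ∃ C₂ > (0:ℝ), ∀ l : ℝ, 0 < l → l ≤ L → ∀ ε : ℝ, 0 < ε → ε < 1 / 2 →
      ∀ r z r' z' : ℝ, (r - l) ^ 2 + z ^ 2 ≤ (l * ε) ^ 2 →
        (r' - l) ^ 2 + z' ^ 2 ≤ (l * ε) ^ 2 → (r, z) ≠ (r', z') →
        Gker (r, z) (r', z') * r' ≤
          (1 + C₁ * ε) * l ^ 2 / (4 * π ^ 2) *
            Real.log (((r - r') ^ 2 + (z - z') ^ 2) ^ (-(1:ℝ) / 2)) + C₂ := by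
  have hπ := Real.pi_pos
  set C₂ := ((5/2)*L^2*|Real.log (Real.sqrt 2 * L)|
      + (9/4)*L^2*(|Real.log (9*π/2*L)| + π^2))/(4*π^2) + 1 with hC₂_def
  have hC₂pos : 0 < C₂ := by positivity
  clear_value C₂
  refine ⟨3, by norm_num, C₂, hC₂pos, ?_⟩
  intro l hl hlL ε hε hε2 r z r' z' h1 h2 hne
  obtain ⟨⟨hrd, hru⟩, hz2⟩ := aux_disc hl hε h1
  obtain ⟨⟨hr'd, hr'u⟩, hz'2⟩ := aux_disc hl hε h2
  have hlε : l*ε < l*(1/2) := mul_lt_mul_of_pos_left hε2 hl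
  have hr0 : 0 < r := by linarith
  have hr'0 : 0 < r' := by linarith
  obtain ⟨a, ha_def⟩ : ∃ x : ℝ, x = r * r' := ⟨_, rfl⟩
  have ha : 0 < a := ha_def ▸ mul_pos hr0 hr'0
  obtain ⟨s, hs_def⟩ : ∃ x : ℝ, x = Real.sqrt a := ⟨_, rfl⟩
  have hs : 0 < s := hs_def ▸ Real.sqrt_pos.mpr ha
  have hs2 : s^2 = a := by rw [hs_def]; exact Real.sq_sqrt ha.le
  have hsu : s ≤ l*(1+ε) := by
    have h : a ≤ (l*(1+ε))^2 := by
      rw [ha_def]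
      calc r * r' ≤ (l + l*ε)*(l + l*ε) := mul_le_mul hru hr'u hr'0.le (by linarith)
        _ = (l*(1+ε))^2 := by ring
    rw [hs_def]
    calc Real.sqrt a ≤ Real.sqrt ((l*(1+ε))^2) := Real.sqrt_le_sqrt h
      _ = l*(1+ε) := Real.sqrt_sq (by positivity)
  have hsd : l/2 ≤ s := by
    have h : (l/2)^2 ≤ a := by
      rw [ha_def]
      calc (l/2)^2 = (l/2)*(l/2) := by ring
        _ ≤ r * r' := mul_le_mul (by linarith) (by linarith) (by linarith) hr0.le
    rw [hs_def]
    calc l/2 = Real.sqrt ((l/2)^2) := (Real.sqrt_sq (by linarith)).symm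
      _ ≤ Real.sqrt a := Real.sqrt_le_sqrt h
  obtain ⟨d2, hd2_def⟩ : ∃ x : ℝ, x = (r - r')^2 + (z - z')^2 := ⟨_, rfl⟩
  rw [← hd2_def]
  have hd2pos : 0 < d2 := by
    rcases (show (0:ℝ) ≤ d2 by rw [hd2_def]; positivity).lt_or_eq with h | h
    · exact h
    · exfalso
      apply hne
      rw [hd2_def] at h
      have hrr : (r - r')^2 = 0 := by
        have := sq_nonneg (r - r'); have := sq_nonneg (z - z'); linarith
      have hzz : (z - z')^2 = 0 := by
        have := sq_nonneg (r - r'); have := sq_nonneg (z - z'); linarith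
      have e1 : r - r' = 0 := by
        have := (pow_eq_zero_iff (two_ne_zero)).mp hrr; exact this
      have e2 : z - z' = 0 := by
        have := (pow_eq_zero_iff (two_ne_zero)).mp hzz; exact this
      have er : r = r' := by linarith
      have ez : z = z' := by linarith
      rw [er, ez]
  obtain ⟨d, hd_def⟩ : ∃ x : ℝ, x = Real.sqrt d2 := ⟨_, rfl⟩
  have hd : 0 < d := hd_def ▸ Real.sqrt_pos.mpr hd2pos
  have hdsq : d^2 = d2 := by rw [hd_def]; exact Real.sq_sqrt hd2pos.le
  have hrr2 : (r-r')^2 ≤ (2*(l*ε))^2 :=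
    sq_le_sq' (by linarith) (by linarith)
  have hzz2 : (z-z')^2 ≤ 4*(l*ε)^2 := by
    have := sq_nonneg (z+z'); have := sq_nonneg (z-z'); linarith
  have h8 : 8*(l*ε)^2 ≤ 2*l^2 := by
    have hq : ε*ε < 1/4 := by
      have := mul_lt_mul'' hε2 hε2 hε.le hε.le
      linarith
    have h0 : 0 ≤ (l*l)*(1/4 - ε*ε) := mul_nonneg (by positivity) (by linarith)
    linarith [h0]
  have hd2ub : d2 ≤ 2*l^2 := by
    rw [hd2_def]; linarith [hrr2, hzz2, h8]
  have hdub : d ≤ Real.sqrt 2 * l := by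
    rw [hd_def]
    calc Real.sqrt d2 ≤ Real.sqrt (2*l^2) := Real.sqrt_le_sqrt hd2ub
      _ = Real.sqrt 2 * l := by
        rw [Real.sqrt_mul (by norm_num), Real.sqrt_sq hl.le]
  have hπ3 : (3:ℝ) ≤ π := Real.pi_gt_three.le
  have hda : d ≤ π * s := by
    have hps : 3*(l/2) ≤ π*s := mul_le_mul hπ3 hsd (by linarith) (by linarith)
    have hsqps := mul_self_le_mul_self (show (0:ℝ) ≤ 3*(l/2) by linarith) hps
    have hq : d^2 ≤ (π*s)^2 := by
      linarith [hsqps, hdsq, hd2ub, sq_nonneg l]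
    have h := Real.sqrt_le_sqrt hq
    rwa [Real.sqrt_sq hd.le, Real.sqrt_sq (by positivity)] at h
  -- rewrite Gker
  have hGk : Gker (r,z) (r',z') * r'
      = a*r'/(8*π^2) * ∫ θ in (-π)..π, Real.cos θ / Real.sqrt (d^2 + 2*a*(1 - Real.cos θ)) := by
    have harg : ∀ θ : ℝ, (z - z')^2 + r^2 + r'^2 - 2*r*r'*Real.cos θ
        = d^2 + 2*a*(1 - Real.cos θ) := by
      intro θ; rw [hdsq, hd2_def, ha_def]; ring
    simp only [Gker]
    simp_rw [harg]
    rw [ha_def]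
    ring
  have hda' : d ≤ π * Real.sqrt a := by rw [← hs_def]; exact hda
  have hkey := key_integral_bound d a hd ha hda'
  rw [← hs_def] at hkey
  have hGb : Gker (r,z) (r',z') * r'
      ≤ (a*r'/(8*π^2)) * ((2/s)*(Real.log (3*π*s/d) + π^2)) := by
    rw [hGk]
    exact mul_le_mul_of_nonneg_left hkey (by positivity)
  have hsimp : (a*r'/(8*π^2)) * ((2/s)*(Real.log (3*π*s/d) + π^2))
      = s*r'*(Real.log (3*π*s/d) + π^2)/(4*π^2) := by
    rw [← hs2]; field_simp; ring
  have hlog : Real.log (3*π*s/d) = Real.log (3*π*s) - Real.log d :=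
    Real.log_div (by positivity) (ne_of_gt hd)
  have hlogRHS : Real.log (d2 ^ (-(1:ℝ)/2)) = - Real.log d := by
    rw [Real.log_rpow hd2pos, show d2 = d^2 from hdsq.symm, Real.log_pow]
    push_cast; ring
  have F5 : Real.log d ≤ |Real.log (Real.sqrt 2 * L)| := by
    have h2 : Real.sqrt 2 * l ≤ Real.sqrt 2 * L :=
      mul_le_mul_of_nonneg_left hlL (Real.sqrt_nonneg 2)
    exact (Real.log_le_log hd (hdub.trans h2)).trans (le_abs_self _)
  have F6 : Real.log (3*π*s) ≤ |Real.log (9*π/2*L)| := by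
    have hsL : s ≤ (3/2)*L := by linarith [hsu, hlε, hlL]
    have h3 : 3*π*s ≤ 9*π/2*L := by
      linarith [mul_le_mul_of_nonneg_left hsL (by positivity : (0:ℝ) ≤ 3*π)]
    exact (Real.log_le_log (by positivity) h3).trans (le_abs_self _)
  have hC : 4*π^2*C₂ = (5/2)*L^2*|Real.log (Real.sqrt 2 * L)|
      + (9/4)*L^2*(|Real.log (9*π/2*L)| + π^2) + 4*π^2 := by
    rw [hC₂_def]; field_simp
  have hN : s*r'*(Real.log (3*π*s) - Real.log d + π^2)
      ≤ (1+3*ε)*l^2*(-Real.log d) + 4*π^2*C₂ :=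
    aux_final L l ε s r' (Real.log d) (|Real.log (Real.sqrt 2 * L)|)
      (|Real.log (9*π/2*L)|) (Real.log (3*π*s)) (π^2) C₂
      hL hl hlL hε hε2 hs hr'0 hsu hr'u F5 (abs_nonneg _) F6 (abs_nonneg _)
      (by positivity) hC
  calc Gker (r,z) (r',z') * r'
      ≤ s*r'*(Real.log (3*π*s/d) + π^2)/(4*π^2) := by rw [← hsimp]; exact hGb
    _ = s*r'*(Real.log (3*π*s) - Real.log d + π^2)/(4*π^2) := by rw [hlog]
    _ ≤ ((1+3*ε)*l^2*(-Real.log d) + 4*π^2*C₂)/(4*π^2) :=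
        (div_le_div_iff_of_pos_right (by positivity)).mpr hN
    _ = (1+3*ε)*l^2/(4*π^2) * (-Real.log d) + C₂ := by field_simp
    _ = (1+3*ε)*l^2/(4*π^2) * Real.log (d2 ^ (-(1:ℝ)/2)) + C₂ := by rw [hlogRHS]
end
end
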